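/- arXiv:0907.3332 — 3 statements merged into one kernel-verified Lean document; each statement's English description precedes it below -/
import Mathlib

section
/- Let L be a linearly ordered MV-algebra, let C ⊆ L be a convex set, and let a ∈ L. Then the set {z → a | z ∈ C} is convex. -/
/-- An MV-algebra: a commutative monoid `(L, ⊕, 0)` with a unary `¬` satisfying
`¬¬x = x`, `x ⊕ ¬0 = ¬0` and `¬(¬x ⊕ y) ⊕ y = ¬(¬y ⊕ x) ⊕ x`. -/
class MV (L : Type*) where
  add : L → L → L
  zero : L
  neg : L → L
  add_assoc : ∀ x y z : L, add (add x y) z = add x (add y z)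
  add_comm : ∀ x y : L, add x y = add y x
  add_zero : ∀ x : L, add x zero = x
  neg_neg : ∀ x : L, neg (neg x) = x
  add_neg_zero : ∀ x : L, add x (neg zero) = neg zero
  luk : ∀ x y : L, add (neg (add (neg x) y)) y = add (neg (add (neg y) x)) x

namespace MV

variable {L : Type*} [MV L]

/-- `1 = ¬0`. -/
def one : L := neg zero

/-- `x → y = ¬x ⊕ y`. -/
def imp (x y : L) : L := add (neg x) y

/-- `x ⊗ y = ¬(¬x ⊕ ¬y)`. -/
def otimes (x y : L) : L := neg (add (neg x) (neg y))

/-- `x ∨ y = (x → y) → y`. -/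
def join (x y : L) : L := imp (imp x y) y

/-- `x ∧ y = ¬(¬x ∨ ¬y)`. -/
def meet (x y : L) : L := neg (join (neg x) (neg y))

/-- `x ≤ y` iff `x → y = 1`. -/
def le (x y : L) : Prop := imp x y = one

/-- `x < y` iff `x ≤ y` and `x ≠ y`. -/
def lt (x y : L) : Prop := le x y ∧ x ≠ y

/-- A lattice filter: nonempty, upward closed, closed under `∧`. -/
def IsLatticeFilter (F : Set L) : Prop :=
  F.Nonempty ∧ (∀ x y : L, x ∈ F → le x y → y ∈ F) ∧
    (∀ x y : L, x ∈ F → y ∈ F → meet x y ∈ F)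

/-- A prime lattice filter: a proper lattice filter such that
`x ∨ y ∈ F` implies `x ∈ F` or `y ∈ F`. -/
def IsPrimeFilter (F : Set L) : Prop :=
  IsLatticeFilter F ∧ F ≠ Set.univ ∧ ∀ x y : L, join x y ∈ F → x ∈ F ∨ y ∈ F

/-- `F ⊸ G = {z | ∀ a ∉ G, z → a ∉ F}` (intended for `F ⊆ G`). -/
def lolli (F G : Set L) : Set L := {z | ∀ a ∉ G, imp z a ∉ F}

/-- The general `F ⊸ G = (F ∩ G) ⊸ G`. -/
def lolli' (F G : Set L) : Set L := lolli (F ∩ G) G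

/-- The kernel `K(F) = {z | ∀ a ∉ F, z → a ∉ F}`. -/
def ker (F : Set L) : Set L := {z | ∀ a ∉ F, imp z a ∉ F}

/-- `F⁺ = {z | ¬z ∉ F}`. -/
def plus (F : Set L) : Set L := {z | neg z ∉ F}

/-- An implication filter: contains `1` and is closed under modus ponens. -/
def IsImplicationFilter (P : Set L) : Prop :=
  (one : L) ∈ P ∧ ∀ x y : L, x ∈ P → imp x y ∈ P → y ∈ P

/-- `x ~_P y` iff `x → y ∈ P` and `y → x ∈ P`. -/
def simP (P : Set L) (x y : L) : Prop := imp x y ∈ P ∧ imp y x ∈ P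

/-- `J_u(F, P) = {z | ∃ f ∈ F, z ~_P f}`. -/
def Ju (F P : Set L) : Set L := {z | ∃ f ∈ F, simP P z f}

/-- `J_d(F, P) = (J_u(F⁺, P))⁺`. -/
def Jd (F P : Set L) : Set L := plus (Ju (plus F) P)

end MV

open MV

section Aux

variable {L : Type*} [MV L]

private lemma mv_zero_add (x : L) : MV.add MV.zero x = x := by
  rw [MV.add_comm, MV.add_zero]

private lemma mv_add_one (x : L) : MV.add x (one : L) = one := MV.add_neg_zero x

private lemma mv_one_add (x : L) : MV.add (one : L) x = one := by
  rw [MV.add_comm]; exact mv_add_one x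

private lemma mv_neg_one : MV.neg (one : L) = MV.zero := MV.neg_neg MV.zero

private lemma mv_neg_add_self (x : L) : MV.add (MV.neg x) x = one := by
  have h := MV.luk (one : L) x
  rw [mv_neg_one, mv_zero_add] at h
  rw [h, mv_add_one]

private lemma mv_le_of_eq_add {x y : L} (z : L) (h : y = MV.add x z) : le x y := by
  unfold le imp
  rw [h, ← MV.add_assoc, mv_neg_add_self, mv_one_add]

private lemma mv_eq_add_of_le {x y : L} (h : le x y) :
    y = MV.add x (MV.neg (MV.add (MV.neg y) x)) := by
  have hl := MV.luk x y
  unfold le imp at h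
  rw [h, mv_neg_one, mv_zero_add] at hl
  exact hl.trans (MV.add_comm _ _)

private lemma mv_le_refl (x : L) : le x x := mv_le_of_eq_add MV.zero (MV.add_zero x).symm

private lemma mv_le_trans {x y z : L} (h1 : le x y) (h2 : le y z) : le x z := by
  obtain ⟨u, hu⟩ : ∃ u, y = MV.add x u := ⟨_, mv_eq_add_of_le h1⟩
  obtain ⟨v, hv⟩ : ∃ v, z = MV.add y v := ⟨_, mv_eq_add_of_le h2⟩
  exact mv_le_of_eq_add (MV.add u v) (by rw [hv, hu, MV.add_assoc])

private lemma mv_le_antisymm {x y : L} (h1 : le x y) (h2 : le y x) : x = y := by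
  have hl := MV.luk x y
  unfold le imp at h1 h2
  rw [h1, h2, mv_neg_one, mv_zero_add, mv_zero_add] at hl
  exact hl.symm

private lemma mv_le_one (x : L) : le x (one : L) := by
  unfold le imp; exact mv_add_one _

private lemma mv_add_le_add {x y : L} (c : L) (h : le x y) : le (MV.add c x) (MV.add c y) := by
  obtain ⟨u, hu⟩ : ∃ u, y = MV.add x u := ⟨_, mv_eq_add_of_le h⟩
  exact mv_le_of_eq_add u (by rw [hu, MV.add_assoc])

private lemma mv_neg_le_neg {x y : L} (h : le x y) : le (MV.neg y) (MV.neg x) := by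
  obtain ⟨u, hu⟩ : ∃ u, y = MV.add x u := ⟨_, mv_eq_add_of_le h⟩
  unfold le imp
  rw [MV.neg_neg, hu, MV.add_comm (MV.add x u) (MV.neg x), ← MV.add_assoc,
    mv_neg_add_self, mv_one_add]

private lemma mv_imp_antitone {x y : L} (a : L) (h : le x y) : le (imp y a) (imp x a) := by
  unfold imp
  rw [MV.add_comm (MV.neg y) a, MV.add_comm (MV.neg x) a]
  exact mv_add_le_add a (mv_neg_le_neg h)

private lemma mv_le_imp (z a : L) : le a (imp z a) := by
  unfold imp
  exact mv_le_of_eq_add (MV.neg z) (MV.add_comm _ _)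

private lemma mv_le_imp_imp (v a : L) : le v (imp (imp v a) a) := by
  unfold imp
  rw [MV.luk v a]
  exact mv_le_of_eq_add _ (MV.add_comm _ _)

private lemma mv_imp_imp_of_le {a w : L} (h : le a w) : imp (imp w a) a = w := by
  unfold imp
  rw [MV.luk w a]
  unfold le imp at h
  rw [h, mv_neg_one, mv_zero_add]

end Aux

/-- In a linearly ordered MV-algebra, if `C` is convex then
`{z → a | z ∈ C}` is convex. -/
theorem stmt_15 {L : Type*} [MV L]
    (hlin : ∀ x y : L, le x y ∨ le y x)
    (C : Set L)
    (hC : ∀ x ∈ C, ∀ y ∈ C, ∀ z : L, le x z → le z y → z ∈ C)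
    (a : L) :
    ∀ x ∈ {w : L | ∃ z ∈ C, w = imp z a},
      ∀ y ∈ {w : L | ∃ z ∈ C, w = imp z a},
        ∀ z : L, le x z → le z y → z ∈ {w : L | ∃ u ∈ C, w = imp u a} := by
  rintro x ⟨u, hu, rfl⟩ y ⟨v, hv, rfl⟩ w hxw hwy
  rcases hlin u a with hua | hau
  · -- u ≤ a, so imp u a = 1 and w = 1
    have hx1 : imp u a = one := hua
    have hw1 : w = one := mv_le_antisymm (mv_le_one w) (hx1 ▸ hxw)
    exact ⟨u, hu, by rw [hw1, hx1]⟩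
  · -- a ≤ u
    have haw : le a w := mv_le_trans (mv_le_imp u a) hxw
    refine ⟨imp w a, ?_, (mv_imp_imp_of_le haw).symm⟩
    -- v ≤ imp w a ≤ u
    have htu : le (imp w a) u := by
      have h1 : le (imp w a) (imp (imp u a) a) := mv_imp_antitone a hxw
      rw [mv_imp_imp_of_le hau] at h1
      exact h1
    have hvt : le v (imp w a) :=
      mv_le_trans (mv_le_imp_imp v a) (mv_imp_antitone a hwy)
    exact hC v hv u hu (imp w a) hvt htu
end

section
/- Let L be a linearly ordered MV-algebra and let p, q ∈ L with 0 < p < q < 1. Then ]q, 1] ⊸ ]p, 1] = [q → p, 1], where ]x, 1] = {z ∈ L | x < z} and [x, 1] = {z ∈ L | x ≤ z}. -/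
open MV

namespace MVAux

variable {L : Type*} [MV L]

lemma add_one' (x : L) : add x (one : L) = one := add_neg_zero x

lemma zero_add' (x : L) : add (zero : L) x = x := by
  rw [MV.add_comm]; exact MV.add_zero x

lemma neg_one' : (neg (one : L)) = zero := MV.neg_neg zero

lemma imp_one_left (x : L) : imp (one : L) x = x := by
  unfold imp one; rw [MV.neg_neg, zero_add']

lemma neg_add_self (x : L) : add (neg x) x = one := by
  have h := MV.luk x (one : L)
  rw [add_one', neg_one', zero_add'] at h
  exact h.symm

lemma le_refl' (x : L) : le x x := neg_add_self x

lemma le_antisymm' {x y : L} (h1 : le x y) (h2 : le y x) : x = y := by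
  have h := MV.luk x y
  unfold le imp at h1 h2
  rw [h1, h2, neg_one', zero_add', zero_add'] at h
  exact h.symm

lemma exists_add_of_le {x y : L} (h : le x y) : ∃ a, y = add x a := by
  have hl := MV.luk x y
  unfold le imp at h
  rw [h, neg_one', zero_add'] at hl
  exact ⟨neg (add (neg y) x), by rw [MV.add_comm]; exact hl⟩

lemma le_of_eq_add {x y : L} (a : L) (h : y = add x a) : le x y := by
  unfold le imp
  rw [h, ← MV.add_assoc, neg_add_self, MV.add_comm, add_one']

lemma le_trans' {x y z : L} (h1 : le x y) (h2 : le y z) : le x z := by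
  obtain ⟨a, ha⟩ := exists_add_of_le h1
  obtain ⟨b, hb⟩ := exists_add_of_le h2
  exact le_of_eq_add (add a b) (by rw [hb, ha, MV.add_assoc])

lemma add_le_add_left' {x y : L} (c : L) (h : le x y) : le (add c x) (add c y) := by
  obtain ⟨a, ha⟩ := exists_add_of_le h
  exact le_of_eq_add a (by rw [ha, MV.add_assoc])

lemma neg_le_neg' {x y : L} (h : le x y) : le (neg y) (neg x) := by
  unfold le imp at h ⊢
  rw [MV.neg_neg, MV.add_comm]
  exact h

lemma imp_le_imp_right {x y : L} (c : L) (h : le x y) : le (imp c x) (imp c y) :=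
  add_le_add_left' (neg c) h

lemma imp_le_imp_left {x y : L} (c : L) (h : le x y) : le (imp y c) (imp x c) := by
  unfold imp
  rw [MV.add_comm (neg y) c, MV.add_comm (neg x) c]
  exact add_le_add_left' c (neg_le_neg' h)

lemma luk_imp (x y : L) : imp (imp x y) y = imp (imp y x) x := MV.luk x y

lemma imp_eq_one {x y : L} (h : le x y) : imp x y = one := h

lemma not_lt_self (x : L) : ¬ lt x x := fun h => h.2 rfl

lemma le_of_not_lt {x y : L} (hlin : ∀ a b : L, le a b ∨ le b a)
    (h : ¬ lt x y) : le y x := by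
  rcases hlin x y with h1 | h1
  · by_cases he : x = y
    · exact he ▸ le_refl' x
    · exact absurd ⟨h1, he⟩ h
  · exact h1

end MVAux

open MVAux

/-- In a linearly ordered MV-algebra with `0 < p < q < 1`,
`]q, 1] ⊸ ]p, 1] = [q → p, 1]`. -/
theorem stmt_18 {L : Type*} [MV L]
    (hlin : ∀ x y : L, le x y ∨ le y x)
    (p q : L) (h0p : lt (zero : L) p) (hpq : lt p q) (hq1 : lt q (one : L)) :
    lolli {z : L | lt q z} {z : L | lt p z} = {z : L | le (imp q p) z} := by
  ext z
  simp only [lolli, Set.mem_setOf_eq]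
  constructor
  · intro hz
    have hzp : ¬ lt q (imp z p) := hz p (not_lt_self p)
    have h1 : le (imp z p) q := le_of_not_lt hlin hzp
    have hpz : le p z := by
      rcases hlin z p with h | h
      · exfalso
        have he : imp z p = one := h
        rw [he] at h1
        have h1' : imp (one : L) q = one := h1
        rw [imp_one_left] at h1'
        exact hq1.2 h1'
      · exact h
    have h2 : le (imp q p) (imp (imp z p) p) := imp_le_imp_left p h1
    rw [luk_imp, imp_eq_one hpz, imp_one_left] at h2
    exact h2
  · intro hz a ha hqa
    have hap : le a p := le_of_not_lt hlin ha
    have h1 : le (imp z a) (imp z p) := imp_le_imp_right z hap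
    have h2 : le (imp z p) (imp (imp q p) p) := imp_le_imp_left p hz
    have h3 : imp (imp q p) p = q := by
      rw [luk_imp, imp_eq_one hpq.1, imp_one_left]
    have h4 : le (imp z a) q := le_trans' h1 (h3 ▸ h2)
    exact hqa.2 (le_antisymm' hqa.1 h4)
end

section
/- Let L be a linearly ordered MV-algebra in which the order is dense (whenever x < y there exists w with x < w < y), and let F, G be prime lattice filters of L with K(F) = K(G) = {1}. Then F ⊸ G = {1} if and only if G ⊆ F, or there exists g ∈ L with G = [g, 1] = {z | g ≤ z} and F = ]g, 1] = {z | g < z}. -/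
namespace MV

variable {L : Type*} [MV L]

theorem neg_one : (neg (one : L)) = zero := neg_neg zero
theorem zero_add (x : L) : add zero x = x := by rw [add_comm]; exact add_zero x
theorem add_one (x : L) : add x one = one := add_neg_zero x
theorem one_add (x : L) : add one x = one := by rw [add_comm]; exact add_neg_zero x
theorem imp_one_left (a : L) : imp one a = a := by
  show add (neg one) a = a
  rw [neg_one, zero_add]

theorem neg_add_self (x : L) : add (neg x) x = one := by
  have h := luk x (one : L)
  rw [add_one, neg_one, zero_add] at h
  exact h.symm

theorem le_refl (x : L) : le x x := neg_add_self x
theorem le_one (x : L) : le x one := add_neg_zero (neg x)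

theorem le_antisymm {x y : L} (h1 : le x y) (h2 : le y x) : x = y := by
  have h := luk x y
  have h1' : add (neg x) y = one := h1
  have h2' : add (neg y) x = one := h2
  rw [h1', h2', neg_one, zero_add, zero_add] at h
  exact h.symm

theorem le_iff_exists {x y : L} : le x y ↔ ∃ z, add x z = y := by
  constructor
  · intro h
    refine ⟨neg (add (neg y) x), ?_⟩
    have hl := luk x y
    have h' : add (neg x) y = one := h
    rw [h', neg_one, zero_add] at hl
    rw [add_comm]
    exact hl.symm
  · rintro ⟨z, rfl⟩
    show add (neg x) (add x z) = one
    rw [← add_assoc, neg_add_self, one_add]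

theorem le_trans {x y z : L} (h1 : le x y) (h2 : le y z) : le x z := by
  obtain ⟨u, hu⟩ := le_iff_exists.mp h1
  obtain ⟨v, hv⟩ := le_iff_exists.mp h2
  exact le_iff_exists.mpr ⟨add u v, by rw [← add_assoc, hu, hv]⟩

theorem add_le_add_left {a a' : L} (h : le a a') (z : L) : le (add z a) (add z a') := by
  obtain ⟨u, hu⟩ := le_iff_exists.mp h
  exact le_iff_exists.mpr ⟨u, by rw [add_assoc, hu]⟩

theorem imp_le_imp {z a a' : L} (h : le a a') : le (imp z a) (imp z a') :=
  add_le_add_left h (neg z)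

theorem imp_neg (x y : L) : imp (neg y) (neg x) = imp x y := by
  show add (neg (neg y)) (neg x) = add (neg x) y
  rw [neg_neg, add_comm]

theorem neg_le_neg {x y : L} (h : le x y) : le (neg y) (neg x) := by
  show imp (neg y) (neg x) = one
  rw [imp_neg]; exact h

theorem join_comm (x y : L) : join x y = join y x := luk x y

theorem join_of_le {x y : L} (h : le x y) : join x y = y := by
  show imp (imp x y) y = y
  rw [show imp x y = one from h, imp_one_left]

theorem meet_of_le {x y : L} (h : le x y) : meet x y = x := by
  show neg (join (neg x) (neg y)) = x
  rw [join_comm, join_of_le (neg_le_neg h), neg_neg]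

theorem meet_eq_otimes (a x : L) : meet a (neg x) = otimes (add a x) (neg x) := by
  unfold meet join imp otimes
  simp only [neg_neg]

theorem cancel (hlin : ∀ x y : L, le x y ∨ le y x) {x a a' : L}
    (h : add x a = add x a') (hne : add x a ≠ one) : a = a' := by
  have hne' : add x a' ≠ one := h ▸ hne
  have key : ∀ b : L, add x b ≠ one → le b (neg x) := by
    intro b hb
    rcases hlin (neg x) b with hc | hc
    · exfalso
      apply hb
      have hc' : add (neg (neg x)) b = one := hc
      rwa [neg_neg] at hc'
    · exact hc
  have h1 : meet a (neg x) = meet a' (neg x) := by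
    rw [meet_eq_otimes, meet_eq_otimes, add_comm a x, add_comm a' x, h]
  rw [meet_of_le (key a hne), meet_of_le (key a' hne')] at h1
  exact h1

theorem lt_of_not_le (hlin : ∀ x y : L, le x y ∨ le y x) {x y : L}
    (h : ¬ le x y) : lt y x :=
  ⟨(hlin x y).resolve_left h, fun e => h (by rw [e]; exact le_refl x)⟩

theorem le_of_lt {x y : L} (h : lt x y) : le x y := h.1

theorem mem_not_mem_lt (hlin : ∀ x y : L, le x y ∨ le y x) {F : Set L}
    (hup : ∀ x y : L, x ∈ F → le x y → y ∈ F) {x y : L}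
    (hx : x ∈ F) (hy : y ∉ F) : lt y x :=
  lt_of_not_le hlin (fun h => hy (hup x y hx h))

end MV

open MV
/-- In a densely linearly ordered MV-algebra, for prime lattice
filters `F`, `G` with `K(F) = K(G) = {1}`: `F ⊸ G = {1}` iff `G ⊆ F` or
`G = [g, 1]` and `F = ]g, 1]` for some `g`. -/
theorem stmt_19 {L : Type*} [MV L]
    (hlin : ∀ x y : L, le x y ∨ le y x)
    (hdense : ∀ x y : L, lt x y → ∃ w : L, lt x w ∧ lt w y)
    (F G : Set L) (hF : IsPrimeFilter F) (hG : IsPrimeFilter G)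
    (hKF : ker F = {(one : L)}) (hKG : ker G = {(one : L)}) :
    lolli' F G = {(one : L)} ↔
      G ⊆ F ∨ ∃ g : L, G = {z : L | le g z} ∧ F = {z : L | lt g z} := by
  obtain ⟨⟨⟨fF, hfF⟩, hFup, hFmeet⟩, hFproper, hFprime⟩ := hF
  obtain ⟨⟨⟨gG, hgG⟩, hGup, hGmeet⟩, hGproper, hGprime⟩ := hG
  constructor
  · intro hlol
    by_cases hGF : G ⊆ F
    · exact Or.inl hGF
    right
    obtain ⟨g, hgG', hgF⟩ := Set.not_subset.mp hGF
    -- any two elements of G \ F are equal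
    have key : ∀ a b : L, a ∈ G → a ∉ F → b ∈ G → b ∉ F → lt a b → False := by
      intro a b haG haF hbG hbF hab
      have hzne : imp b a ≠ one := fun h => hab.2 (le_antisymm hab.1 h)
      have hz : imp b a ∈ lolli' F G := by
        simp only [lolli', lolli, Set.mem_setOf_eq]
        intro c hc hmem
        have hca : le c a := (hlin a c).resolve_left (fun h => hc (hGup a c haG h))
        have h2 : imp (imp b a) a = b := by
          show join b a = b
          rw [join_comm]
          exact join_of_le hab.1
        have h1 : le (imp (imp b a) c) b := by
          have h1' := imp_le_imp (z := imp b a) hca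
          rwa [h2] at h1'
        exact hbF (hFup _ b hmem.1 h1)
      rw [hlol] at hz
      exact hzne hz
    refine ⟨g, ?_, ?_⟩
    · ext z
      simp only [Set.mem_setOf_eq]
      constructor
      · intro hzG
        rcases hlin g z with h | h
        · exact h
        · by_cases hzF : z ∈ F
          · exact (mem_not_mem_lt hlin hFup hzF hgF).1
          · have hez : z = g := by
              by_contra ne
              exact key z g hzG hzF hgG' hgF ⟨h, ne⟩
            rw [hez]
            exact le_refl g
      · intro h
        exact hGup g z hgG' h
    · ext z
      simp only [Set.mem_setOf_eq]
      constructor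
      · intro hzF
        exact mem_not_mem_lt hlin hFup hzF hgF
      · intro hz
        by_contra hzF
        exact key g z hgG' hgF (hGup g z hgG' hz.1) hzF hz
  · rintro (hGF | ⟨g, rfl, rfl⟩)
    · have hFG : F ∩ G = G := Set.inter_eq_right.mpr hGF
      rw [← hKG]
      show lolli (F ∩ G) G = ker G
      rw [hFG]
      rfl
    · have hg1 : g ≠ one := by
        intro e
        have h1 : lt g fF := hfF
        exact h1.2 (le_antisymm h1.1 (by rw [e]; exact le_one fF))
      have hsub : {z : L | lt g z} ⊆ {z : L | le g z} := fun x hx => MV.le_of_lt hx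
      ext z
      simp only [Set.mem_singleton_iff]
      constructor
      · intro hz
        have hz0 : ∀ a, a ∉ {z : L | le g z} → imp z a ∉ {z : L | lt g z} ∩ {z : L | le g z} := hz
        have hz' : ∀ a, a ∉ {z : L | le g z} → imp z a ∉ {z : L | lt g z} :=
          fun a ha hm => hz0 a ha ⟨hm, hsub hm⟩
        by_contra hz1
        have hzker : z ∉ ker {z : L | le g z} := by
          rw [hKG]
          exact hz1
        simp only [ker, Set.mem_setOf_eq] at hzker
        push_neg at hzker
        obtain ⟨a, haG, hzaG⟩ := hzker
        have hzaG' : le g (imp z a) := hzaG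
        have hag : lt a g := lt_of_not_le hlin haG
        have e1 : imp z a = g := by
          have h2 : ¬ lt g (imp z a) := hz' a haG
          by_contra ne
          exact h2 ⟨hzaG', fun e => ne e.symm⟩
        obtain ⟨w, hw1, hw2⟩ := hdense a g hag
        have hwG : w ∉ {z : L | le g z} := fun h => hw2.2 (le_antisymm hw2.1 h)
        have e2 : imp z w = g := by
          have hle : le g (imp z w) := by
            have h3 : le (imp z a) (imp z w) := imp_le_imp hw1.1
            rwa [e1] at h3
          have h2 : ¬ lt g (imp z w) := hz' w hwG
          by_contra ne
          exact h2 ⟨hle, fun e => ne e.symm⟩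
        have e1' : add (neg z) a = g := e1
        have e2' : add (neg z) w = g := e2
        have haw : a = w := cancel hlin (e1'.trans e2'.symm) (by rw [e1']; exact hg1)
        exact hw1.2 haw
      · intro hz
        subst hz
        show ∀ a, a ∉ {z : L | le g z} → imp one a ∉ {z : L | lt g z} ∩ {z : L | le g z}
        intro a ha hmem
        rw [imp_one_left] at hmem
        exact ha hmem.2
end
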